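/- Let s, r, ω ∈ ℝ with ω ≠ 0, and let y ∈ ℝ³ with y ≠ S and y ≠ R, where S = (s, 0, 0) and R = (0, 0, r); set A = ‖y−S‖, B = ‖y−R‖. Then the determinant of the 3×3 matrix with rows (−(y₂²+y₃²)ω/A³, y₁(y₃−r)ω/B³, (y₁−s)/A + y₁/B), (y₂(y₁−s)ω/A³, y₂(y₃−r)ω/B³, y₂/A + y₂/B), (y₃(y₁−s)ω/A³, −(y₁²+y₂²)ω/B³, y₃/A + (y₃−r)/B) vanishes if and only if y₂ = 0 or ⟨y, (y−S)/A + (y−R)/B⟩ = 0, where ⟨·,·⟩ is the Euclidean inner product on ℝ³. -/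

import Mathlib

set_option maxHeartbeats 2000000 in
private lemma walkaway_det_aux (s r ω A B : ℝ) (y : EuclideanSpace ℝ (Fin 3))
    (hA0 : A ≠ 0) (hB0 : B ≠ 0)
    (hA2 : A ^ 2 = (y 0 - s) ^ 2 + (y 1) ^ 2 + (y 2) ^ 2)
    (hB2 : B ^ 2 = (y 0) ^ 2 + (y 1) ^ 2 + (y 2 - r) ^ 2) :
    (!![-((y 1) ^ 2 + (y 2) ^ 2) * ω / A ^ 3,
        y 0 * (y 2 - r) * ω / B ^ 3,
        (y 0 - s) / A + y 0 / B;
        y 1 * (y 0 - s) * ω / A ^ 3,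
        y 1 * (y 2 - r) * ω / B ^ 3,
        y 1 / A + y 1 / B;
        y 2 * (y 0 - s) * ω / A ^ 3,
        -((y 0) ^ 2 + (y 1) ^ 2) * ω / B ^ 3,
        y 2 / A + (y 2 - r) / B]).det
      = -(ω ^ 2) * (y 1) * (A * ((y 0) ^ 2 + (y 1) ^ 2 + y 2 * (y 2 - r))
          + B * (y 0 * (y 0 - s) + (y 1) ^ 2 + (y 2) ^ 2)) / (A ^ 3 * B ^ 3) := by
  have step : (!![-((y 1) ^ 2 + (y 2) ^ 2) * ω / A ^ 3,
        y 0 * (y 2 - r) * ω / B ^ 3,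
        (y 0 - s) / A + y 0 / B;
        y 1 * (y 0 - s) * ω / A ^ 3,
        y 1 * (y 2 - r) * ω / B ^ 3,
        y 1 / A + y 1 / B;
        y 2 * (y 0 - s) * ω / A ^ 3,
        -((y 0) ^ 2 + (y 1) ^ 2) * ω / B ^ 3,
        y 2 / A + (y 2 - r) / B]).det
      = ω ^ 2 * (-(y 1) * A ^ 2 * ((y 0) ^ 2 + (y 1) ^ 2 + y 2 * (y 2 - r)) * B
          + -(y 1) * B ^ 2 * (y 0 * (y 0 - s) + (y 1) ^ 2 + (y 2) ^ 2) * A) / (A ^ 4 * B ^ 4) := by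
    rw [Matrix.det_fin_three, hA2, hB2]
    simp only [Matrix.of_apply, Matrix.cons_val', Matrix.cons_val_zero, Matrix.cons_val_one, Matrix.head_cons,
      Matrix.empty_val', Matrix.cons_val_fin_one, Matrix.head_fin_const, Matrix.cons_val_two,
      Matrix.tail_cons]
    field_simp
    ring
  rw [step]
  field_simp
  ring

/-- Characterization of the critical set of the right projection `π_R` for the
walkaway geometry: the Jacobian determinant vanishes iff `y₂ = 0` (the surface `Σ¹`)
or `⟨y, (y−S)/A + (y−R)/B⟩ = 0` (the surface `Σ²`). -/
theorem walkaway_det_dpiR_eq_zero_iff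
    (s r ω : ℝ) (hω : ω ≠ 0) (y S R : EuclideanSpace ℝ (Fin 3))
    (hS : S = ![s, 0, 0]) (hR : R = ![0, 0, r])
    (hyS : y ≠ S) (hyR : y ≠ R)
    (A B : ℝ) (hA : A = ‖y - S‖) (hB : B = ‖y - R‖) :
    (!![-((y 1) ^ 2 + (y 2) ^ 2) * ω / A ^ 3,
        y 0 * (y 2 - r) * ω / B ^ 3,
        (y 0 - s) / A + y 0 / B;
        y 1 * (y 0 - s) * ω / A ^ 3,
        y 1 * (y 2 - r) * ω / B ^ 3,
        y 1 / A + y 1 / B;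
        y 2 * (y 0 - s) * ω / A ^ 3,
        -((y 0) ^ 2 + (y 1) ^ 2) * ω / B ^ 3,
        y 2 / A + (y 2 - r) / B]).det = 0
      ↔ y 1 = 0 ∨ (inner ℝ y (A⁻¹ • (y - S) + B⁻¹ • (y - R)) : ℝ) = 0 := by
  have hA0 : A ≠ 0 := by
    rw [hA, norm_ne_zero_iff]; exact sub_ne_zero.mpr hyS
  have hB0 : B ≠ 0 := by
    rw [hB, norm_ne_zero_iff]; exact sub_ne_zero.mpr hyR
  have hA2 : A ^ 2 = (y 0 - s) ^ 2 + (y 1) ^ 2 + (y 2) ^ 2 := by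
    rw [hA, ← real_inner_self_eq_norm_sq, PiLp.inner_apply]
    simp [-real_inner_self_eq_norm_sq, PiLp.inner_apply, Fin.sum_univ_three, hS]
  have hB2 : B ^ 2 = (y 0) ^ 2 + (y 1) ^ 2 + (y 2 - r) ^ 2 := by
    rw [hB, ← real_inner_self_eq_norm_sq, PiLp.inner_apply]
    simp [-real_inner_self_eq_norm_sq, PiLp.inner_apply, Fin.sum_univ_three, hR]
  have hinner : (inner ℝ y (A⁻¹ • (y - S) + B⁻¹ • (y - R)) : ℝ)
      = (y 0 * (y 0 - s) + (y 1) ^ 2 + (y 2) ^ 2) / A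
        + ((y 0) ^ 2 + (y 1) ^ 2 + y 2 * (y 2 - r)) / B := by
    simp [PiLp.inner_apply, Fin.sum_univ_three, hS, hR]
    ring
  rw [walkaway_det_aux s r ω A B y hA0 hB0 hA2 hB2, hinner,
    div_add_div _ _ hA0 hB0, div_eq_zero_iff, div_eq_zero_iff]
  set U : ℝ := y 0 * (y 0 - s) + (y 1) ^ 2 + (y 2) ^ 2
  set V : ℝ := (y 0) ^ 2 + (y 1) ^ 2 + y 2 * (y 2 - r)
  have hω2 : -ω ^ 2 ≠ 0 := by simpa [neg_eq_zero] using pow_ne_zero 2 hω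
  constructor
  · rintro (h | h)
    · rcases mul_eq_zero.mp h with h' | h'
      · rcases mul_eq_zero.mp h' with h'' | h''
        · exact absurd h'' hω2
        · exact Or.inl h''
      · exact Or.inr (Or.inl (by linarith))
    · exact absurd h (by positivity)
  · rintro (h | h | h)
    · left; linear_combination (-ω ^ 2 * (A * V + B * U)) * h
    · left; linear_combination (-ω ^ 2 * y 1) * h
    · exact absurd h (by positivity)
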